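/- Let T = conv(v₀,…,v_k) ⊆ ℝᵐ and U = conv(w₀,…,w_k) ⊆ ℝⁿ be regular k-simplexes with den(vᵢ) = den(wᵢ) for all i = 0,…,k. Then there exists exactly one map η: T → U which is the restriction of an affine map with integer coefficients, is a bijection onto U whose inverse is also the restriction of an affine map with integer coefficients, and satisfies η(vᵢ) = wᵢ for all i. -/

import Mathlib

open scoped BigOperators

/-- The least common denominator of a rational point `v ∈ ℚⁿ`. -/
def den {n : ℕ} (v : Fin n → ℚ) : ℕ :=
  Finset.univ.lcm fun i => (v i).den

/-- The homogeneous correspondent `ṽ = den(v)·(v,1) ∈ ℤ^{n+1}` of a rational point `v`. -/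
def homc {n : ℕ} (v : Fin n → ℚ) : Fin (n + 1) → ℤ :=
  fun j => if h : (j : ℕ) < n then ((den v : ℚ) * v ⟨j, h⟩).num else (den v : ℤ)

/-- A finite family of rational points in `ℚⁿ` is regular if their homogeneous
correspondents form part of a basis of the free abelian group `ℤ^{n+1}`. -/
def IsRegularPts {ι : Type*} [Fintype ι] {n : ℕ} (v : ι → (Fin n → ℚ)) : Prop :=
  ∃ (b : Module.Basis (Fin (n + 1)) ℤ (Fin (n + 1) → ℤ)) (f : ι → Fin (n + 1)),
    Function.Injective f ∧ ∀ i, b (f i) = homc (v i)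

/-- The affine map `x ↦ Mx + b` with integer coefficients, on real points. -/
def affR {m n : ℕ} (M : Matrix (Fin m) (Fin n) ℤ) (b : Fin m → ℤ)
    (x : Fin n → ℝ) : Fin m → ℝ :=
  fun j => (∑ i, (M j i : ℝ) * x i) + (b j : ℝ)

/-- A rational point of `ℚⁿ`, viewed in `ℝⁿ`. -/
def toR {n : ℕ} (q : Fin n → ℚ) : Fin n → ℝ := fun i => (q i : ℝ)

lemma den_ne_zero {m : ℕ} (q : Fin m → ℚ) : den q ≠ 0 := by
  intro h
  rw [den, Finset.lcm_eq_zero_iff] at h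
  obtain ⟨i, -, hi⟩ := h
  exact (q i).den_nz hi

lemma den_dvd {m : ℕ} (q : Fin m → ℚ) (i : Fin m) : (q i).den ∣ den q :=
  Finset.dvd_lcm (Finset.mem_univ i)

lemma num_mul_den_dvd {a : ℚ} {d : ℕ} (h : a.den ∣ d) :
    (((d : ℚ) * a).num : ℚ) = (d : ℚ) * a := by
  obtain ⟨c, hc⟩ := h
  have key : (d : ℚ) * a = ((a.num * c : ℤ) : ℚ) := by
    have hden0 : (a.den : ℚ) ≠ 0 := by exact_mod_cast a.den_nz
    have h1 : (a.den : ℚ) * a = (a.num : ℚ) := by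
      rw [mul_comm]
      exact ((div_eq_iff hden0).mp (Rat.num_div_den a)).symm
    push_cast [hc]
    rw [mul_comm (a.den : ℚ) (c : ℚ), mul_assoc, h1]
    ring
  rw [key, Rat.num_intCast]

lemma homc_castSucc {m : ℕ} (q : Fin m → ℚ) (i : Fin m) :
    ((homc q i.castSucc : ℤ) : ℚ) = (den q : ℚ) * q i := by
  have h : ((i.castSucc : ℕ)) < m := i.isLt
  rw [homc]
  simp only [h, dif_pos]
  have : (⟨(i.castSucc : ℕ), h⟩ : Fin m) = i := by ext; simp
  rw [this]
  exact num_mul_den_dvd (den_dvd q i)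

lemma homc_last {m : ℕ} (q : Fin m → ℚ) : homc q (Fin.last m) = (den q : ℤ) := by
  rw [homc]; simp

/-- standard basis vector -/
def stdv {m : ℕ} (t : Fin m) : Fin m → ℤ := fun j => if t = j then 1 else 0

def Mof {m n : ℕ} (L : (Fin (m+1) → ℤ) →ₗ[ℤ] (Fin (n+1) → ℤ)) :
    Matrix (Fin n) (Fin m) ℤ := fun j i => L (stdv i.castSucc) j.castSucc

def bof {m n : ℕ} (L : (Fin (m+1) → ℤ) →ₗ[ℤ] (Fin (n+1) → ℤ)) :
    Fin n → ℤ := fun j => L (stdv (Fin.last m)) j.castSucc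

lemma keyA {m n : ℕ} (L : (Fin (m+1) → ℤ) →ₗ[ℤ] (Fin (n+1) → ℤ))
    (q : Fin m → ℚ) (j : Fin n) :
    (den q : ℝ) * affR (Mof L) (bof L) (toR q) j = ((L (homc q)) j.castSucc : ℝ) := by
  have expand : L (homc q) = ∑ t : Fin (m+1), homc q t • L (stdv t) := by
    conv_lhs => rw [LinearMap.pi_apply_eq_sum_univ L (homc q)]
    rfl
  have hcoord : (L (homc q)) j.castSucc
      = ∑ t : Fin (m+1), homc q t * (L (stdv t)) j.castSucc := by
    rw [expand]
    simp [Finset.sum_apply]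
  have hc : ∀ i : Fin m, ((homc q i.castSucc : ℤ) : ℝ) = (den q : ℝ) * (q i : ℝ) := by
    intro i
    have := homc_castSucc q i
    exact_mod_cast congrArg (fun x : ℚ => (x : ℝ)) this
  have hl : ((homc q (Fin.last m) : ℤ) : ℝ) = (den q : ℝ) := by
    rw [homc_last]; push_cast; ring
  rw [hcoord]
  push_cast
  rw [Fin.sum_univ_castSucc]
  simp only [hc, hl]
  show (den q : ℝ) * ((∑ i, ((Mof L j i : ℤ) : ℝ) * toR q i) + ((bof L j : ℤ) : ℝ)) = _
  simp only [Mof, bof, toR]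
  rw [mul_add, Finset.mul_sum]
  congr 1
  apply Finset.sum_congr rfl
  intro i _
  ring

lemma affR_of_homc {m n : ℕ} (L : (Fin (m+1) → ℤ) →ₗ[ℤ] (Fin (n+1) → ℤ))
    (q : Fin m → ℚ) (r : Fin n → ℚ) (hL : L (homc q) = homc r) (hd : den q = den r) :
    affR (Mof L) (bof L) (toR q) = toR r := by
  funext j
  have h1 := keyA L q j
  rw [hL] at h1
  have h2 : ((homc r j.castSucc : ℤ) : ℝ) = (den r : ℝ) * (r j : ℝ) := by
    have := homc_castSucc r j
    exact_mod_cast congrArg (fun x : ℚ => (x : ℝ)) this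
  rw [h2, hd] at h1
  have h0 : (den r : ℝ) ≠ 0 := by
    exact_mod_cast den_ne_zero r
  exact mul_left_cancel₀ h0 h1

noncomputable def affA {m n : ℕ} (M : Matrix (Fin n) (Fin m) ℤ) (b : Fin n → ℤ) :
    (Fin m → ℝ) →ᵃ[ℝ] (Fin n → ℝ) where
  toFun := affR M b
  linear := Matrix.mulVecLin (M.map (Int.cast : ℤ → ℝ))
  map_vadd' p v := by
    funext j
    simp only [affR, Matrix.mulVecLin_apply, Matrix.mulVec, dotProduct,
      Matrix.map_apply, vadd_eq_add, Pi.add_apply, mul_add, Finset.sum_add_distrib]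
    ring

@[simp] lemma affA_apply {m n : ℕ} (M : Matrix (Fin n) (Fin m) ℤ) (b : Fin n → ℤ)
    (x : Fin m → ℝ) : affA M b x = affR M b x := rfl

lemma affine_eqOn {m n : ℕ} {ι : Type*} (F G : (Fin m → ℝ) →ᵃ[ℝ] (Fin n → ℝ))
    (p : ι → Fin m → ℝ) (h : ∀ i, F (p i) = G (p i)) :
    ∀ x ∈ convexHull ℝ (Set.range p), F x = G x := by
  intro x hx
  rw [convexHull_range_eq_exists_affineCombination] at hx
  obtain ⟨s, wt, -, hw1, rfl⟩ := hx
  rw [Finset.map_affineCombination _ _ _ hw1 F, Finset.map_affineCombination _ _ _ hw1 G]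
  have hfg : ⇑F ∘ p = ⇑G ∘ p := funext h
  rw [hfg]

/-- Let `T = conv(v₀,…,v_k) ⊆ ℝᵐ` and `U = conv(w₀,…,w_k) ⊆ ℝⁿ` be regular `k`-simplexes
with `den vᵢ = den wᵢ` for all `i`. Then there is exactly one map `η : T → U` which is the
restriction of an affine map with integer coefficients, maps `T` onto `U`, has an inverse
which is also the restriction of an affine map with integer coefficients, and satisfies
`η(vᵢ) = wᵢ` for all `i`. -/
theorem unique_Z_linear_map_of_regular_simplexes {m n k : ℕ}
    (v : Fin (k + 1) → (Fin m → ℚ)) (w : Fin (k + 1) → (Fin n → ℚ))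
    (hv : IsRegularPts v) (hw : IsRegularPts w)
    (hden : ∀ i, den (v i) = den (w i)) :
    ∃ η : (Fin m → ℝ) → (Fin n → ℝ),
      (((∃ M b, ∀ x ∈ convexHull ℝ (Set.range fun i => toR (v i)), η x = affR M b x) ∧
        η '' convexHull ℝ (Set.range fun i => toR (v i)) =
          convexHull ℝ (Set.range fun i => toR (w i)) ∧
        (∃ M' b', ∀ x ∈ convexHull ℝ (Set.range fun i => toR (v i)),
          affR M' b' (η x) = x) ∧
        ∀ i, η (toR (v i)) = toR (w i))) ∧
      ∀ η' : (Fin m → ℝ) → (Fin n → ℝ),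
        (((∃ M b, ∀ x ∈ convexHull ℝ (Set.range fun i => toR (v i)), η' x = affR M b x) ∧
          η' '' convexHull ℝ (Set.range fun i => toR (v i)) =
            convexHull ℝ (Set.range fun i => toR (w i)) ∧
          (∃ M' b', ∀ x ∈ convexHull ℝ (Set.range fun i => toR (v i)),
            affR M' b' (η' x) = x) ∧
          ∀ i, η' (toR (v i)) = toR (w i))) →
        ∀ x ∈ convexHull ℝ (Set.range fun i => toR (v i)), η' x = η x := by
  obtain ⟨bv, f, hf, hbf⟩ := hv
  obtain ⟨bw, g, hg, hbg⟩ := hw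
  set L : (Fin (m+1) → ℤ) →ₗ[ℤ] (Fin (n+1) → ℤ) :=
    bv.constr ℤ (Function.extend f (fun i => homc (w i)) 0) with hLdef
  set L' : (Fin (n+1) → ℤ) →ₗ[ℤ] (Fin (m+1) → ℤ) :=
    bw.constr ℤ (Function.extend g (fun i => homc (v i)) 0) with hL'def
  have hL : ∀ i, L (homc (v i)) = homc (w i) := by
    intro i
    rw [← hbf i, hLdef, Module.Basis.constr_basis, hf.extend_apply]
  have hL' : ∀ i, L' (homc (w i)) = homc (v i) := by
    intro i
    rw [← hbg i, hL'def, Module.Basis.constr_basis, hg.extend_apply]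
  have hvw : ∀ i, affR (Mof L) (bof L) (toR (v i)) = toR (w i) :=
    fun i => affR_of_homc L (v i) (w i) (hL i) (hden i)
  have hwv : ∀ i, affR (Mof L') (bof L') (toR (w i)) = toR (v i) :=
    fun i => affR_of_homc L' (w i) (v i) (hL' i) (hden i).symm
  have hmem : ∀ i, toR (v i) ∈ convexHull ℝ (Set.range fun i => toR (v i)) :=
    fun i => subset_convexHull _ _ ⟨i, rfl⟩
  refine ⟨affR (Mof L) (bof L),
    ⟨⟨Mof L, bof L, fun x _ => rfl⟩, ?_, ⟨Mof L', bof L', ?_⟩, hvw⟩, ?_⟩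
  · have hco : affR (Mof L) (bof L) = ⇑(affA (Mof L) (bof L)) := rfl
    rw [hco, AffineMap.image_convexHull]
    congr 1
    rw [← Set.range_comp]
    exact congrArg Set.range (funext fun i => hvw i)
  · intro x hx
    have hpts : ∀ i, ((affA (Mof L') (bof L')).comp (affA (Mof L) (bof L)))
        ((fun i => toR (v i)) i) = (AffineMap.id ℝ (Fin m → ℝ)) ((fun i => toR (v i)) i) := by
      intro i
      show affR (Mof L') (bof L') (affR (Mof L) (bof L) (toR (v i))) = toR (v i)
      rw [hvw i, hwv i]
    exact affine_eqOn _ _ (fun i => toR (v i)) hpts x hx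
  · rintro η' ⟨⟨M₁, b₁, h₁⟩, -, -, h₄⟩ x hx
    have hpts : ∀ i, (affA M₁ b₁) ((fun i => toR (v i)) i)
        = (affA (Mof L) (bof L)) ((fun i => toR (v i)) i) := by
      intro i
      show affR M₁ b₁ (toR (v i)) = affR (Mof L) (bof L) (toR (v i))
      rw [← h₁ _ (hmem i), h₄ i, hvw i]
    have heq := affine_eqOn _ _ (fun i => toR (v i)) hpts x hx
    rw [h₁ x hx]
    exact heq
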